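/- arXiv:1103.2312 — 2 statements merged into one kernel-verified Lean document; each statement's English description precedes it below -/
import Mathlib

section
/- Every hyperfinite Borel equivalence relation is Borel bounded: if E = ⋃_n F_n is a countable Borel equivalence relation on a standard Borel space X which is the increasing union of finite Borel equivalence relations F_n, then for every Borel function φ : X → ℕ^ℕ there exists a Borel homomorphism ψ : X → ℕ^ℕ from E to =* such that φ(x) ≤* ψ(x) for all x ∈ X. -/
open Filter

/-- Eventual equality on `ℕ → ℕ`. -/
def EvEq (α β : ℕ → ℕ) : Prop := ∀ᶠ n in Filter.atTop, α n = β n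

/-- Eventual domination on `ℕ → ℕ`. -/
def EvLe (α β : ℕ → ℕ) : Prop := ∀ᶠ n in Filter.atTop, α n ≤ β n

/-- A finite Borel equivalence relation: a Borel equivalence relation all of
whose classes are finite. -/
def FiniteBorelER {X : Type*} [MeasurableSpace X] (F : X → X → Prop) : Prop :=
  Equivalence F ∧ MeasurableSet {p : X × X | F p.1 p.2} ∧ ∀ x, {y | F x y}.Finite

open Set Function MeasureTheory PiNat

section SigmaSeparation

variable {α : Type*} [TopologicalSpace α] [T2Space α] [MeasurableSpace α]
  [OpensMeasurableSpace α]

/-- A countable family of sets is "separable" if it can be enlarged to a countable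
family of Borel sets with empty intersection. -/
def SepFam (S : ℕ → Set α) : Prop :=
  ∃ B : ℕ → Set α, (∀ k, S k ⊆ B k) ∧ (∀ k, MeasurableSet (B k)) ∧ (⋂ k, B k) = ∅

lemma sepFam_of_iUnion {S : ℕ → Set α} {K : ℕ} {T : ℕ → Set α} (hT : S K = ⋃ i, T i)
    (h : ∀ i : ℕ, SepFam (fun k => if k = K then T i else S k)) : SepFam S := by
  choose B hsub hmeas hempty using h
  classical
  refine ⟨fun k => if k = K then ⋃ i, B i K else ⋂ i, B i k, ?_, ?_, ?_⟩
  · intro k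
    by_cases hk : k = K
    · rw [hk]
      beta_reduce
      rw [if_pos rfl, hT]
      refine Set.iUnion_subset fun i => ?_
      refine subset_trans ?_ (Set.subset_iUnion _ i)
      have := hsub i K
      simpa using this
    · simp only [if_neg hk]
      refine Set.subset_iInter fun i => ?_
      have := hsub i k
      simpa [if_neg hk] using this
  · intro k
    by_cases hk : k = K
    · simp only [if_pos hk]
      exact MeasurableSet.iUnion fun i => hmeas i K
    · simp only [if_neg hk]
      exact MeasurableSet.iInter fun i => hmeas i k
  · rw [Set.eq_empty_iff_forall_notMem]
    intro x hx
    have hxK : x ∈ ⋃ i, B i K := by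
      have := Set.mem_iInter.1 hx K
      simpa using this
    obtain ⟨i, hi⟩ := Set.mem_iUnion.1 hxK
    have : x ∈ ⋂ k, B i k := by
      refine Set.mem_iInter.2 fun k => ?_
      by_cases hk : k = K
      · rw [hk]; exact hi
      · have := Set.mem_iInter.1 hx k
        simp only [if_neg hk] at this
        exact Set.mem_iInter.1 this i
    rw [hempty i] at this
    exact this

/-- Novikov's separation theorem, range form: countably many analytic sets (given as
ranges of continuous functions on Baire space) with empty intersection can be enlarged
to Borel sets with empty intersection. -/
theorem sepFam_range_of_empty_iInter (f : ℕ → (ℕ → ℕ) → α) (hf : ∀ k, Continuous (f k))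
    (hem : (⋂ k, Set.range (f k)) = ∅) : SepFam (fun k => Set.range (f k)) := by
  classical
  by_contra hfg
  -- one-step extension
  have I : ∀ (ℓ : ℕ → ℕ) (x : ℕ → ℕ → ℕ) (K : ℕ),
      ¬ SepFam (fun k => f k '' cylinder (x k) (ℓ k)) →
      ∃ x' : ℕ → ℕ → ℕ, (∀ k, x' k ∈ cylinder (x k) (ℓ k)) ∧
        ¬ SepFam (fun k => f k '' cylinder (x' k) (if k = K then ℓ K + 1 else ℓ k)) := by
    intro ℓ x K
    contrapose!
    intro H
    refine sepFam_of_iUnion (K := K)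
      (T := fun i => f K '' cylinder (Function.update (x K) (ℓ K) i) (ℓ K + 1)) ?_ ?_
    · rw [← iUnion_cylinder_update (x K) (ℓ K), Set.image_iUnion]
    · intro i
      have hmem : ∀ k, (fun k => if k = K then Function.update (x K) (ℓ K) i else x k) k
          ∈ cylinder (x k) (ℓ k) := by
        intro k
        by_cases hk : k = K
        · subst hk; simp only [if_pos rfl]; exact update_mem_cylinder _ _ _
        · simp only [if_neg hk]; exact self_mem_cylinder _ _
      have := H _ hmem
      convert this using 1
      funext k
      by_cases hk : k = K
      · subst hk; simp
      · simp [if_neg hk]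
  -- the space of "bad" states
  let A := {p : (ℕ → ℕ) × (ℕ → ℕ → ℕ) //
    ¬ SepFam (fun k => f k '' cylinder (p.2 k) (p.1 k))}
  have step : ∀ (p : A) (K : ℕ), ∃ q : A,
      (∀ k, q.1.2 k ∈ cylinder (p.1.2 k) (p.1.1 k)) ∧
      q.1.1 = fun k => if k = K then p.1.1 K + 1 else p.1.1 k := by
    rintro ⟨⟨ℓ, x⟩, hp⟩ K
    obtain ⟨x', hx', hbad⟩ := I ℓ x K hp
    exact ⟨⟨⟨fun k => if k = K then ℓ K + 1 else ℓ k, x'⟩, hbad⟩, hx', rfl⟩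
  choose G hG1 hG2 using step
  have h0 : ¬ SepFam (fun k => f k '' cylinder ((fun _ _ => 0) k) ((fun _ => 0) k)) := by
    simpa only [cylinder_zero, Set.image_univ] using hfg
  let p0 : A := ⟨⟨fun _ => 0, fun _ _ => 0⟩, h0⟩
  let K : ℕ → ℕ := fun t => (Nat.unpair t).1
  let p : ℕ → A := fun t => Nat.rec p0 (fun t pt => G pt (K t)) t
  have prec : ∀ t, p (t + 1) = G (p t) (K t) := fun t => rfl
  set ℓ : ℕ → ℕ → ℕ := fun t => (p t).1.1 with hℓ
  set x : ℕ → ℕ → ℕ → ℕ := fun t => (p t).1.2 with hx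
  have ℓsucc : ∀ t k, ℓ (t + 1) k = if k = K t then ℓ t (K t) + 1 else ℓ t k := by
    intro t k
    have h := congrFun (hG2 (p t) (K t)) k
    rw [← prec t] at h
    exact h
  have ℓmono1 : ∀ t k, ℓ t k ≤ ℓ (t + 1) k := by
    intro t k
    rw [ℓsucc t k]
    by_cases hk : k = K t
    · subst hk; simp
    · simp [if_neg hk]
  have ℓmono : ∀ k, Monotone fun t => ℓ t k := fun k =>
    monotone_nat_of_le_succ fun t => ℓmono1 t k
  have ℓbump : ∀ t, ℓ (t + 1) (K t) = ℓ t (K t) + 1 := by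
    intro t; rw [ℓsucc]; simp
  have ℓunbounded : ∀ k n, ∃ t, n ≤ ℓ t k := by
    intro k n
    induction n with
    | zero => exact ⟨0, Nat.zero_le _⟩
    | succ n ih =>
      obtain ⟨t, ht⟩ := ih
      refine ⟨Nat.pair k t + 1, ?_⟩
      have hK : K (Nat.pair k t) = k := by simp [K, Nat.unpair_pair]
      have : ℓ (Nat.pair k t + 1) (K (Nat.pair k t)) = ℓ (Nat.pair k t) (K (Nat.pair k t)) + 1 :=
        ℓbump _
      rw [hK] at this
      rw [this]
      have : ℓ t k ≤ ℓ (Nat.pair k t) k := ℓmono k (Nat.right_le_pair k t)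
      omega
  have xmem : ∀ t k, x (t + 1) k ∈ cylinder (x t k) (ℓ t k) := by
    intro t k
    have h := hG1 (p t) (K t) k
    rw [← prec t] at h
    exact h
  have stable : ∀ k m t s, t ≤ s → m < ℓ t k → x s k m = x t k m := by
    intro k m t s hts hm
    induction s, hts using Nat.le_induction with
    | base => rfl
    | succ s hts ih =>
      have hm' : m < ℓ s k := lt_of_lt_of_le hm (ℓmono k hts)
      have := mem_cylinder_iff.1 (xmem s k) m hm'
      rw [this, ih]
  -- the limit points
  have exT : ∀ k m, ∃ t, m < ℓ t k := fun k m => ℓunbounded k (m + 1)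
  let z : ℕ → ℕ → ℕ := fun k m => x (Nat.find (exT k m)) k m
  have zmem : ∀ t k, z k ∈ cylinder (x t k) (ℓ t k) := by
    intro t k
    rw [mem_cylinder_iff]
    intro m hm
    set T := Nat.find (exT k m) with hT
    have hTm : m < ℓ T k := Nat.find_spec (exT k m)
    have h1 : x (max t T) k m = x T k m := stable k m T (max t T) (le_max_right _ _) hTm
    have h2 : x (max t T) k m = x t k m := stable k m t (max t T) (le_max_left _ _) hm
    show x T k m = x t k m
    rw [← h1, h2]
  have M : ∀ t, ¬ SepFam (fun k => f k '' cylinder (z k) (ℓ t k)) := by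
    intro t
    have heq : (fun k => f k '' cylinder (z k) (ℓ t k))
        = fun k => f k '' cylinder (x t k) (ℓ t k) := by
      funext k
      rw [mem_cylinder_iff_eq.1 (zmem t k)]
    rw [heq]
    exact (p t).2
  -- find two indices with distinct limit values
  have hne : ∃ K₁ K₂, f K₁ (z K₁) ≠ f K₂ (z K₂) := by
    by_contra hc
    push_neg at hc
    have : f 0 (z 0) ∈ ⋂ k, Set.range (f k) := by
      refine Set.mem_iInter.2 fun k => ?_
      rw [hc 0 k]
      exact Set.mem_range_self _
    rw [hem] at this
    exact this
  obtain ⟨K₁, K₂, hK12⟩ := hne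
  have hKne : K₁ ≠ K₂ := by
    rintro rfl
    exact hK12 rfl
  obtain ⟨u, v, u_open, v_open, hu, hv, huv⟩ := t2_separation hK12
  letI : MetricSpace (ℕ → ℕ) := metricSpaceNatNat
  obtain ⟨εx, εxpos, hεx⟩ : ∃ εx : ℝ, εx > 0 ∧ Metric.ball (z K₁) εx ⊆ f K₁ ⁻¹' u := by
    apply Metric.mem_nhds_iff.1
    exact (hf K₁).continuousAt.preimage_mem_nhds (u_open.mem_nhds hu)
  obtain ⟨εy, εypos, hεy⟩ : ∃ εy : ℝ, εy > 0 ∧ Metric.ball (z K₂) εy ⊆ f K₂ ⁻¹' v := by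
    apply Metric.mem_nhds_iff.1
    exact (hf K₂).continuousAt.preimage_mem_nhds (v_open.mem_nhds hv)
  obtain ⟨n, hn⟩ : ∃ n : ℕ, (1 / 2 : ℝ) ^ n < min εx εy :=
    exists_pow_lt_of_lt_one (lt_min εxpos εypos) (by norm_num)
  obtain ⟨t1, ht1⟩ := ℓunbounded K₁ n
  obtain ⟨t2, ht2⟩ := ℓunbounded K₂ n
  set t := max t1 t2 with hts
  have hℓ1 : n ≤ ℓ t K₁ := le_trans ht1 (ℓmono K₁ (le_max_left _ _))
  have hℓ2 : n ≤ ℓ t K₂ := le_trans ht2 (ℓmono K₂ (le_max_right _ _))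
  apply M t
  classical
  refine ⟨fun k => if k = K₁ then u else if k = K₂ then v else Set.univ, ?_, ?_, ?_⟩
  · intro k
    beta_reduce
    by_cases h1 : k = K₁
    · rw [h1, if_pos rfl]
      rw [Set.image_subset_iff]
      refine subset_trans (cylinder_anti _ hℓ1) (subset_trans ?_ hεx)
      intro w hw
      have : dist w (z K₁) ≤ (1 / 2 : ℝ) ^ n := mem_cylinder_iff_dist_le.1 hw
      exact lt_of_le_of_lt this (lt_of_lt_of_le hn (min_le_left _ _))
    · rw [if_neg h1]
      by_cases h2 : k = K₂
      · rw [h2, if_pos rfl]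
        rw [Set.image_subset_iff]
        refine subset_trans (cylinder_anti _ hℓ2) (subset_trans ?_ hεy)
        intro w hw
        have : dist w (z K₂) ≤ (1 / 2 : ℝ) ^ n := mem_cylinder_iff_dist_le.1 hw
        exact lt_of_le_of_lt this (lt_of_lt_of_le hn (min_le_right _ _))
      · rw [if_neg h2]
        exact Set.subset_univ _
  · intro k
    beta_reduce
    by_cases h1 : k = K₁
    · rw [if_pos h1]; exact u_open.measurableSet
    · rw [if_neg h1]
      by_cases h2 : k = K₂
      · rw [if_pos h2]; exact v_open.measurableSet
      · rw [if_neg h2]; exact MeasurableSet.univ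
  · rw [Set.eq_empty_iff_forall_notMem]
    intro w hw
    have hw1 : w ∈ u := by
      have := Set.mem_iInter.1 hw K₁
      simpa using this
    have hw2 : w ∈ v := by
      have := Set.mem_iInter.1 hw K₂
      simpa [if_neg (Ne.symm hKne)] using this
    exact Set.disjoint_left.1 huv hw1 hw2

/-- Novikov's separation theorem: countably many analytic sets with empty intersection
can be enlarged to Borel sets with empty intersection. -/
theorem exists_borel_sep_of_analytic (A : ℕ → Set α) (hA : ∀ k, AnalyticSet (A k))
    (hem : (⋂ k, A k) = ∅) :
    ∃ B : ℕ → Set α, (∀ k, A k ⊆ B k) ∧ (∀ k, MeasurableSet (B k)) ∧ (⋂ k, B k) = ∅ := by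
  classical
  by_cases hne : ∀ k, (A k).Nonempty
  · have hA' : ∀ k, ∃ f : (ℕ → ℕ) → α, Continuous f ∧ Set.range f = A k := by
      intro k
      have := hA k
      rw [MeasureTheory.AnalyticSet] at this
      rcases this with h | h
      · exact absurd h (Set.nonempty_iff_ne_empty.1 (hne k))
      · exact h
    choose f hfc hfr using hA'
    have hem' : (⋂ k, Set.range (f k)) = ∅ := by
      simpa only [hfr] using hem
    obtain ⟨B, h1, h2, h3⟩ := sepFam_range_of_empty_iInter f hfc hem'
    refine ⟨B, fun k => ?_, h2, h3⟩
    rw [← hfr k]; exact h1 k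
  · push_neg at hne
    obtain ⟨K, hK⟩ := hne
    refine ⟨fun k => if k = K then ∅ else Set.univ, ?_, ?_, ?_⟩
    · intro k
      by_cases hk : k = K
      · subst hk; simp [hK]
      · simp [if_neg hk]
    · intro k
      by_cases hk : k = K
      · simp [if_pos hk]
      · simp [if_neg hk]
    · rw [Set.eq_empty_iff_forall_notMem]
      intro w hw
      have := Set.mem_iInter.1 hw K
      simpa using this

end SigmaSeparation

section Invariant

variable {X : Type*} [TopologicalSpace X] [PolishSpace X] [MeasurableSpace X] [BorelSpace X]

/-- Saturation of a set under a relation. -/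
def relSat (R : X → X → Prop) (S : Set X) : Set X := {x | ∃ y, R x y ∧ y ∈ S}

lemma analyticSet_relSat {R : X → X → Prop}
    (hR : MeasurableSet {p : X × X | R p.1 p.2}) {S : Set X} (hS : MeasurableSet S) :
    AnalyticSet (relSat R S) := by
  have heq : relSat R S = Prod.fst '' ({p : X × X | R p.1 p.2} ∩ (Prod.snd ⁻¹' S)) := by
    ext w
    constructor
    · rintro ⟨y, hy, hyS⟩
      exact ⟨(w, y), ⟨hy, hyS⟩, rfl⟩
    · rintro ⟨⟨a, b⟩, ⟨hab, hbS⟩, rfl⟩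
      exact ⟨b, hab, hbS⟩
  rw [heq]
  exact (hR.inter (measurable_snd hS)).analyticSet.image_of_continuous continuous_fst

lemma exists_invariant_borel_between {R : X → X → Prop} (hEq : Equivalence R)
    (hR : MeasurableSet {p : X × X | R p.1 p.2}) {D C : Set X}
    (hD : AnalyticSet D) (hCc : AnalyticSet Cᶜ) (hDC : D ⊆ C)
    (hCinv : ∀ x y, R x y → x ∈ C → y ∈ C) :
    ∃ B, MeasurableSet B ∧ D ⊆ B ∧ B ⊆ C ∧ ∀ x y, R x y → x ∈ B → y ∈ B := by
  have sep : ∀ A : Set X, AnalyticSet A → A ⊆ C →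
      ∃ B', MeasurableSet B' ∧ A ⊆ B' ∧ B' ⊆ C := by
    intro A hA hAC
    obtain ⟨w, hAw, hdisj, hwm⟩ := hA.measurablySeparable hCc
      (Set.disjoint_left.2 fun a ha hac => hac (hAC ha))
    refine ⟨w, hwm, hAw, fun a haw => ?_⟩
    by_contra hac
    exact Set.disjoint_left.1 hdisj hac haw
  obtain ⟨B0, h0m, h0D, h0C⟩ := sep D hD hDC
  have hstep : ∀ b : {B : Set X // MeasurableSet B ∧ B ⊆ C},
      ∃ b' : {B : Set X // MeasurableSet B ∧ B ⊆ C}, relSat R b.1 ⊆ b'.1 := by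
    rintro ⟨B, hBm, hBC⟩
    have hsatC : relSat R B ⊆ C := by
      rintro w ⟨y, hwy, hyB⟩
      exact hCinv y w (hEq.symm hwy) (hBC hyB)
    obtain ⟨B', h1, h2, h3⟩ := sep (relSat R B) (analyticSet_relSat hR hBm) hsatC
    exact ⟨⟨B', h1, h3⟩, h2⟩
  choose next hnext using hstep
  let seq : ℕ → {B : Set X // MeasurableSet B ∧ B ⊆ C} :=
    fun m => next^[m] ⟨B0, h0m, h0C⟩
  have hseq : ∀ m, seq (m + 1) = next (seq m) := by
    intro m
    simp only [seq, Function.iterate_succ_apply']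
  refine ⟨⋃ m, (seq m).1, MeasurableSet.iUnion fun m => (seq m).2.1, ?_, ?_, ?_⟩
  · refine subset_trans ?_ (Set.subset_iUnion (fun m => (seq m).1) 0)
    exact h0D
  · exact Set.iUnion_subset fun m => (seq m).2.2
  · intro a b hab ha
    obtain ⟨m, hm⟩ := Set.mem_iUnion.1 ha
    refine Set.mem_iUnion.2 ⟨m + 1, ?_⟩
    rw [hseq m]
    refine hnext (seq m) ?_
    exact ⟨a, hEq.symm hab, hm⟩

/-- The key consequence of finiteness: any Borel function is dominated by an invariant
Borel ℕ-valued "rank" encoded by a decreasing family of invariant Borel sets. -/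
lemma exists_invariant_family {R : X → X → Prop} (hR : FiniteBorelER R)
    {g : X → ℕ} (hg : Measurable g) :
    ∃ B : ℕ → Set X, (∀ k, MeasurableSet (B k)) ∧
      (∀ k x y, R x y → x ∈ B k → y ∈ B k) ∧
      (∀ j k, j ≤ k → B k ⊆ B j) ∧
      (∀ x, x ∈ B (g x)) ∧ (∀ x, ∃ k, x ∉ B k) := by
  obtain ⟨hEq, hGraph, hFin⟩ := hR
  set S : ℕ → Set X := fun k => {x | k ≤ g x} with hS
  have hSm : ∀ k, MeasurableSet (S k) := fun k => hg measurableSet_Ici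
  set D : ℕ → Set X := fun k => relSat R (S k) with hD
  have hDana : ∀ k, AnalyticSet (D k) := fun k => analyticSet_relSat hGraph (hSm k)
  have hDinv : ∀ k x y, R x y → x ∈ D k → y ∈ D k := by
    rintro k x y hxy ⟨z, hxz, hz⟩
    exact ⟨z, hEq.trans (hEq.symm hxy) hxz, hz⟩
  have hDanti : ∀ j k, j ≤ k → D k ⊆ D j := by
    rintro j k hjk w ⟨y, hwy, hy⟩
    exact ⟨y, hwy, le_trans hjk hy⟩
  have hDem : (⋂ k, D k) = ∅ := by
    rw [Set.eq_empty_iff_forall_notMem]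
    intro w hw
    obtain ⟨b, hb⟩ := ((hFin w).image g).bddAbove
    obtain ⟨y, hwy, hy⟩ := Set.mem_iInter.1 hw (b + 1)
    have h1 : g y ≤ b := hb (Set.mem_image_of_mem g hwy)
    have h2 : b + 1 ≤ g y := hy
    omega
  obtain ⟨B0, hB0sub, hB0m, hB0em⟩ := exists_borel_sep_of_analytic D hDana hDem
  set B1 : ℕ → Set X := fun k => ⋂ j ∈ Finset.range (k + 1), B0 j with hB1
  have hB1m : ∀ k, MeasurableSet (B1 k) :=
    fun k => MeasurableSet.biInter (Set.to_countable _) fun j _ => hB0m j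
  have hB1anti : ∀ j k, j ≤ k → B1 k ⊆ B1 j := by
    intro j k hjk w hw
    refine Set.mem_iInter₂.2 fun i hi => ?_
    refine Set.mem_iInter₂.1 hw i ?_
    simp only [Finset.mem_range] at hi ⊢
    omega
  have hB1sub : ∀ k, D k ⊆ B1 k := by
    intro k w hw
    refine Set.mem_iInter₂.2 fun i hi => ?_
    simp only [Finset.mem_range] at hi
    exact hB0sub i (hDanti i k (by omega) hw)
  have hB1em : ∀ w, ∃ k, w ∉ B1 k := by
    intro w
    by_contra hc
    push_neg at hc
    have : w ∈ ⋂ k, B0 k := by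
      refine Set.mem_iInter.2 fun k => ?_
      have := hc k
      exact Set.mem_iInter₂.1 this k (by simp)
    rw [hB0em] at this
    exact this
  set C : ℕ → Set X := fun k => {x | ∀ y, R x y → y ∈ B1 k} with hC
  have hCc : ∀ k, (C k)ᶜ = relSat R (B1 k)ᶜ := by
    intro k
    ext w
    simp only [Set.mem_compl_iff, hC, Set.mem_setOf_eq, relSat, not_forall]
    constructor
    · rintro ⟨y, hy1, hy2⟩; exact ⟨y, hy1, hy2⟩
    · rintro ⟨y, hy1, hy2⟩; exact ⟨y, hy1, hy2⟩
  have hCinv : ∀ k x y, R x y → x ∈ C k → y ∈ C k := by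
    intro k x y hxy hx z hyz
    exact hx z (hEq.trans hxy hyz)
  have hDC : ∀ k, D k ⊆ C k := by
    intro k w hw z hwz
    exact hB1sub k (hDinv k w z hwz hw)
  have hCB1 : ∀ k, C k ⊆ B1 k := fun k w hw => hw w (hEq.refl w)
  have hinv : ∀ k, ∃ B, MeasurableSet B ∧ D k ⊆ B ∧ B ⊆ C k ∧
      ∀ x y, R x y → x ∈ B → y ∈ B := by
    intro k
    refine exists_invariant_borel_between hEq hGraph (hDana k) ?_ (hDC k) (hCinv k)
    rw [hCc k]
    exact analyticSet_relSat hGraph (hB1m k).compl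
  choose B' hB'm hB'D hB'C hB'inv using hinv
  refine ⟨fun k => ⋂ j ∈ Finset.range (k + 1), B' j, ?_, ?_, ?_, ?_, ?_⟩
  · exact fun k => MeasurableSet.biInter (Set.to_countable _) fun j _ => hB'm j
  · intro k x y hxy hx
    refine Set.mem_iInter₂.2 fun i hi => ?_
    exact hB'inv i x y hxy (Set.mem_iInter₂.1 hx i hi)
  · intro j k hjk w hw
    refine Set.mem_iInter₂.2 fun i hi => ?_
    refine Set.mem_iInter₂.1 hw i ?_
    simp only [Finset.mem_range] at hi ⊢
    omega
  · intro w
    refine Set.mem_iInter₂.2 fun i hi => ?_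
    simp only [Finset.mem_range] at hi
    refine hB'D i ?_
    refine hDanti i (g w) (by omega) ?_
    exact ⟨w, hEq.refl w, Nat.le_refl (g w)⟩
  · intro w
    obtain ⟨k, hk⟩ := hB1em w
    refine ⟨k, fun hw => hk ?_⟩
    have : w ∈ B' k := Set.mem_iInter₂.1 hw k (by simp)
    exact hCB1 k (hB'C k this)

end Invariant

/-- Every hyperfinite Borel equivalence relation is Borel bounded: if the
countable Borel equivalence relation `E` on the standard Borel space `X` is the
increasing union of finite Borel equivalence relations `F n`, then for every
Borel `φ : X → ℕ^ℕ` there is a Borel homomorphism `ψ` from `E` to `=*`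
eventually dominating `φ` pointwise. -/
theorem borelBounded_of_hyperfinite
    {X : Type*} [MeasurableSpace X] [StandardBorelSpace X]
    (E : X → X → Prop) (hEq : Equivalence E)
    (hBorel : MeasurableSet {p : X × X | E p.1 p.2})
    (hCtble : ∀ x, {y | E x y}.Countable)
    (F : ℕ → X → X → Prop) (hF : ∀ n, FiniteBorelER (F n))
    (hmono : ∀ n x y, F n x y → F (n + 1) x y)
    (hunion : ∀ x y, E x y ↔ ∃ n, F n x y) :
    ∀ φ : X → ℕ → ℕ, Measurable φ →
      ∃ ψ : X → ℕ → ℕ, Measurable ψ ∧ (∀ x y, E x y → EvEq (ψ x) (ψ y)) ∧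
        ∀ x, EvLe (φ x) (ψ x) := by
  intro φ hφ
  letI := upgradeStandardBorel X
  have key : ∀ n, ∃ B : ℕ → Set X, (∀ k, MeasurableSet (B k)) ∧
      (∀ k x y, F n x y → x ∈ B k → y ∈ B k) ∧
      (∀ j k, j ≤ k → B k ⊆ B j) ∧
      (∀ x, x ∈ B (φ x n)) ∧ (∀ x, ∃ k, x ∉ B k) := by
    intro n
    exact exists_invariant_family (hF n) ((measurable_pi_apply n).comp hφ)
  choose B hBm hBinv hBanti hBmem hBex using key
  classical
  have hmem_iff : ∀ n x y, F n x y → ∀ k, (x ∈ B n k ↔ y ∈ B n k) := by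
    intro n x y hxy k
    exact ⟨hBinv n k x y hxy, hBinv n k y x ((hF n).1.symm hxy)⟩
  have hlt : ∀ x n, φ x n < Nat.find (hBex n x) := by
    intro x n
    by_contra hc
    push_neg at hc
    exact Nat.find_spec (hBex n x)
      (hBanti n (Nat.find (hBex n x)) (φ x n) hc (hBmem n x))
  refine ⟨fun x n => Nat.find (hBex n x), ?_, ?_, ?_⟩
  · refine measurable_pi_lambda _ fun n => ?_
    refine measurable_to_countable' fun m => ?_
    have heq : (fun x : X => Nat.find (hBex n x)) ⁻¹' {m}
        = (B n m)ᶜ ∩ ⋂ j ∈ Finset.range m, B n j := by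
      ext w
      simp only [Set.mem_preimage, Set.mem_singleton_iff, Set.mem_inter_iff,
        Set.mem_compl_iff, Set.mem_iInter, Finset.mem_range]
      rw [Nat.find_eq_iff]
      constructor
      · rintro ⟨h1, h2⟩
        exact ⟨h1, fun j hj => not_not.1 (h2 j hj)⟩
      · rintro ⟨h1, h2⟩
        exact ⟨h1, fun j hj => not_not.2 (h2 j hj)⟩
    rw [heq]
    exact (hBm n m).compl.inter
      (MeasurableSet.biInter (Set.to_countable _) fun j _ => hBm n j)
  · intro x y hxy
    obtain ⟨n₀, hn₀⟩ := (hunion x y).1 hxy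
    have hall : ∀ n, n₀ ≤ n → F n x y := by
      intro n hn
      induction n, hn using Nat.le_induction with
      | base => exact hn₀
      | succ n hn ih => exact hmono n x y ih
    refine Filter.eventually_atTop.2 ⟨n₀, fun n hn => ?_⟩
    have h1 : ∀ k, x ∈ B n k ↔ y ∈ B n k := hmem_iff n x y (hall n hn)
    exact le_antisymm
      (Nat.find_min' (hBex n x) fun hh => Nat.find_spec (hBex n y) ((h1 _).1 hh))
      (Nat.find_min' (hBex n y) fun hh => Nat.find_spec (hBex n x) ((h1 _).2 hh))
  · intro x
    exact Filter.eventually_atTop.2 ⟨0, fun n _ => le_of_lt (hlt x n)⟩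
end

section
/- If E is a hyperfinite Borel equivalence relation on a standard Borel space X, then E has property 𝗉 (Borel pseudo-intersecting). -/
open Filter

/-- Eventual equality on `2^ℕ` (i.e. finite symmetric difference, `=*`). -/
def EvEqB (x y : ℕ → Bool) : Prop := ∀ᶠ n in Filter.atTop, x n = y n

/-- `x` is an infinite subset of `ℕ` (i.e. `x ∈ [ℕ]^ℕ`). -/
def IsInfSet (x : ℕ → Bool) : Prop := {n | x n = true}.Infinite

/-- Almost containment `x ⊆* y`: `x \ y` is finite. -/
def AlmostSubset (x y : ℕ → Bool) : Prop := {n | x n = true ∧ y n = false}.Finite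

/-- The complement `ℕ \ x` of a subset of `ℕ`. -/
def complB (x : ℕ → Bool) : ℕ → Bool := fun n => !(x n)

/-- A family of subsets of `ℕ` is centered if every finite subfamily has
infinite intersection. -/
def CenteredFam (F : Set (ℕ → Bool)) : Prop :=
  ∀ s : Finset (ℕ → Bool), ↑s ⊆ F → {k | ∀ A ∈ s, A k = true}.Infinite

/-- `E` has property `𝗉` (Borel pseudo-intersecting): for every Borel
homomorphism `φ : X → ([ℕ]^ℕ)^ℕ` from `E` to `E_set` whose associated families
are centered, there is a Borel homomorphism `ψ : X → [ℕ]^ℕ` from `E` to `=*`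
with `ψ(x) ⊆* φ(x)(n)` for all `x` and `n`. -/
def PropertyP {X : Type*} [MeasurableSpace X] (E : X → X → Prop) : Prop :=
  ∀ φ : X → ℕ → ℕ → Bool, Measurable φ → (∀ x n, IsInfSet (φ x n)) →
    (∀ x y, E x y → Set.range (φ x) = Set.range (φ y)) →
    (∀ x, CenteredFam (Set.range (φ x))) →
    ∃ ψ : X → ℕ → Bool, Measurable ψ ∧ (∀ x, IsInfSet (ψ x)) ∧
      (∀ x y, E x y → EvEqB (ψ x) (ψ y)) ∧
      ∀ x n, AlmostSubset (ψ x) (φ x n)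

open Set Function PolishSpace PiNat TopologicalSpace MeasureTheory

section NovikovSeparation

/-- A sequence of sets is *vanishingly enclosable* if it can be enclosed in a sequence of
measurable sets with empty intersection. -/
def Encl {α : Type*} [MeasurableSpace α] (S : ℕ → Set α) : Prop :=
  ∃ D : ℕ → Set α, (∀ n, MeasurableSet (D n)) ∧ (∀ n, S n ⊆ D n) ∧ (⋂ n, D n) = ∅

theorem Encl.mono {α : Type*} [MeasurableSpace α] {S S' : ℕ → Set α}
    (h : ∀ n, S n ⊆ S' n) (h' : Encl S') : Encl S := by
  obtain ⟨D, hm, hs, he⟩ := h'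
  exact ⟨D, hm, fun n => (h n).trans (hs n), he⟩

theorem encl_combine {α : Type*} [MeasurableSpace α] {S : ℕ → Set α} {j : ℕ} {T : ℕ → Set α}
    (hS : S j ⊆ ⋃ i, T i) (h : ∀ i, Encl (Function.update S j (T i))) : Encl S := by
  classical
  choose D hDm hDs hDe using h
  refine ⟨fun n => if n = j then ⋃ i, D i j else ⋂ i, ((D i j)ᶜ ∪ D i n), ?_, ?_, ?_⟩
  · intro n
    by_cases hn : n = j
    · simp only [hn, if_pos rfl]
      exact MeasurableSet.iUnion fun i => hDm i j
    · simp only [if_neg hn]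
      exact MeasurableSet.iInter fun i => ((hDm i j).compl.union (hDm i n))
  · intro n x hx
    by_cases hn : n = j
    · subst hn
      simp only [if_pos rfl]
      obtain ⟨_, ⟨i, rfl⟩, hxi⟩ := hS hx
      have := hDs i n
      rw [Function.update_self] at this
      exact mem_iUnion.2 ⟨i, this hxi⟩
    · simp only [if_neg hn]
      refine mem_iInter.2 fun i => Or.inr ?_
      have := hDs i n
      rw [Function.update_of_ne hn] at this
      exact this hx
  · rw [eq_empty_iff_forall_notMem]
    intro x hx
    have hxj := mem_iInter.1 hx j
    rw [if_pos rfl] at hxj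
    obtain ⟨i₀, hxi₀⟩ := mem_iUnion.1 hxj
    have : x ∈ ⋂ n, D i₀ n := by
      refine mem_iInter.2 fun n => ?_
      by_cases hn : n = j
      · exact hn ▸ hxi₀
      · have hxn := mem_iInter.1 hx n
        rw [if_neg hn] at hxn
        rcases mem_iInter.1 hxn i₀ with h' | h'
        · exact absurd hxi₀ h'
        · exact h'
    rw [hDe i₀] at this
    exact this

/-- **Novikov separation theorem**, for ranges of continuous maps from Baire space. -/
theorem novikov_ranges {α : Type*} [TopologicalSpace α] [T2Space α] [MeasurableSpace α]
    [OpensMeasurableSpace α] {f : ℕ → (ℕ → ℕ) → α} (hf : ∀ n, Continuous (f n))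
    (h : (⋂ n, range (f n)) = ∅) : Encl (fun n => range (f n)) := by
  classical
  by_contra hcon
  -- the families of images of cylinders attached to a "state"
  set Fam : (ℕ → ℕ × (ℕ → ℕ)) → ℕ → Set α :=
    fun σ n => f n '' cylinder (σ n).2 (σ n).1 with hFam
  -- if a state is bad, one can refine any given slot keeping it bad
  have I : ∀ σ, ¬ Encl (Fam σ) → ∀ j, ∃ y', y' ∈ cylinder (σ j).2 (σ j).1 ∧
      ¬ Encl (Fam (Function.update σ j ((σ j).1 + 1, y'))) := by
    intro σ hσ j
    by_contra hall
    push_neg at hall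
    apply hσ
    apply encl_combine (j := j)
      (T := fun i => f j '' cylinder (Function.update (σ j).2 (σ j).1 i) ((σ j).1 + 1))
    · have : cylinder (σ j).2 (σ j).1
          = ⋃ i, cylinder (Function.update (σ j).2 (σ j).1 i) ((σ j).1 + 1) :=
        (iUnion_cylinder_update _ _).symm
      simp only [hFam]
      rw [this, image_iUnion]
    · intro i
      have h1 := hall (Function.update (σ j).2 (σ j).1 i) (update_mem_cylinder _ _ _)
      have h2 : Function.update (Fam σ) j
            (f j '' cylinder (Function.update (σ j).2 (σ j).1 i) ((σ j).1 + 1))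
          = Fam (Function.update σ j ((σ j).1 + 1, Function.update (σ j).2 (σ j).1 i)) := by
        funext n
        by_cases hn : n = j
        · subst hn; simp [hFam]
        · simp [hFam, Function.update_of_ne hn]
      rw [h2]
      exact h1
  -- iterate, refining slot `(Nat.unpair t).1` at time `t`
  have step : ∀ (σ : {σ : ℕ → ℕ × (ℕ → ℕ) // ¬ Encl (Fam σ)}) (j : ℕ),
      ∃ τ : {σ : ℕ → ℕ × (ℕ → ℕ) // ¬ Encl (Fam σ)},
        (τ.1 j).1 = (σ.1 j).1 + 1 ∧ (τ.1 j).2 ∈ cylinder (σ.1 j).2 (σ.1 j).1 ∧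
        ∀ n, n ≠ j → τ.1 n = σ.1 n := by
    rintro ⟨σ, hσ⟩ j
    rcases I σ hσ j with ⟨y', hy', hbad⟩
    refine ⟨⟨Function.update σ j ((σ j).1 + 1, y'), hbad⟩, ?_, ?_, ?_⟩
    · simp
    · simpa using hy'
    · intro n hn; simp [Function.update_of_ne hn]
  choose G hG1 hG2 hG3 using step
  have hbad0 : ¬ Encl (Fam fun _ => (0, fun _ => 0)) := by
    have : (Fam fun _ => (0, fun _ => 0)) = fun n => range (f n) := by
      funext n
      simp only [hFam, cylinder_zero, image_univ]
    rw [this]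
    exact hcon
  set p : ℕ → {σ : ℕ → ℕ × (ℕ → ℕ) // ¬ Encl (Fam σ)} :=
    fun t => Nat.rec ⟨fun _ => (0, fun _ => 0), hbad0⟩ (fun t ih => G ih (Nat.unpair t).1) t
    with hp
  have prec : ∀ t, p (t + 1) = G (p t) (Nat.unpair t).1 := fun t => rfl
  set depth : ℕ → ℕ → ℕ := fun t j => ((p t).1 j).1 with hdepth
  set center : ℕ → ℕ → ℕ → ℕ := fun t j => ((p t).1 j).2 with hcenter
  -- basic step monotonicity
  have mono : ∀ j t, depth t j ≤ depth (t + 1) j ∧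
      ∀ m < depth t j, center (t + 1) j m = center t j m := by
    intro j t
    by_cases hs : (Nat.unpair t).1 = j
    · constructor
      · rw [hdepth]
        simp only
        rw [prec, ← hs, hG1]
        exact Nat.le_succ _
      · intro m hm
        have := hG2 (p t) (Nat.unpair t).1
        rw [hs] at this
        rw [hcenter]
        simp only
        rw [prec, ← hs]
        rw [hs]
        exact mem_cylinder_iff.1 this m hm
    · have heq := hG3 (p t) (Nat.unpair t).1 j (fun hh => hs hh.symm)
      constructor
      · rw [hdepth]; simp only; rw [prec, heq]
      · intro m _; rw [hcenter]; simp only; rw [prec, heq]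
  have mono' : ∀ j t t', t ≤ t' → depth t j ≤ depth t' j ∧
      ∀ m < depth t j, center t' j m = center t j m := by
    intro j t t' ht
    induction t', ht using Nat.le_induction with
    | base => exact ⟨le_rfl, fun _ _ => rfl⟩
    | succ t'' ht'' ih =>
      refine ⟨ih.1.trans (mono j t'').1, fun m hm => ?_⟩
      rw [(mono j t'').2 m (lt_of_lt_of_le hm ih.1), ih.2 m hm]
  -- depths are unbounded
  have unb : ∀ j B, ∃ t, B ≤ depth t j := by
    intro j B
    induction B with
    | zero => exact ⟨0, Nat.zero_le _⟩
    | succ B ih =>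
      obtain ⟨t, ht⟩ := ih
      refine ⟨Nat.pair j t + 1, ?_⟩
      have h1 : t ≤ Nat.pair j t := Nat.right_le_pair j t
      have h2 : depth t j ≤ depth (Nat.pair j t) j := (mono' j t _ h1).1
      have h3 : depth (Nat.pair j t + 1) j = depth (Nat.pair j t) j + 1 := by
        rw [hdepth]
        simp only
        rw [prec, Nat.unpair_pair, hG1]
      omega
  have unb' : ∀ j m, ∃ t, m + 1 ≤ depth t j := fun j m => unb j (m + 1)
  choose tf htf using unb'
  -- the limit point of each slot
  set x : ℕ → ℕ → ℕ := fun j m => center (tf j m) j m with hx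
  have key : ∀ t j m, m < depth t j → x j m = center t j m := by
    intro t j m hm
    have h1 := (mono' j t (max t (tf j m)) (le_max_left _ _)).2 m hm
    have h2 := (mono' j (tf j m) (max t (tf j m)) (le_max_right _ _)).2 m
      (lt_of_lt_of_le (Nat.lt_succ_self m) (htf j m))
    rw [hx]
    simp only
    rw [← h2, h1]
  have key2 : ∀ t j l, l ≤ depth t j →
      cylinder (center t j) (depth t j) ⊆ cylinder (x j) l := by
    intro t j l hl w hw
    rw [mem_cylinder_iff] at hw ⊢
    intro m hm
    rw [hw m (lt_of_lt_of_le hm hl), key t j m (lt_of_lt_of_le hm hl)]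
  -- the limit values
  set z : ℕ → α := fun j => f j (x j) with hz
  by_cases hzeq : ∀ j, z j = z 0
  · -- all limit values are equal: a common point of all the ranges, contradiction
    have : z 0 ∈ ⋂ n, range (f n) := by
      refine mem_iInter.2 fun n => ?_
      rw [← hzeq n]
      exact mem_range_self _
    rw [h] at this
    exact this
  · push_neg at hzeq
    obtain ⟨j, hj⟩ := hzeq
    have hj0 : j ≠ 0 := by rintro rfl; exact hj rfl
    obtain ⟨u, v, u_open, v_open, hzu, hzv, huv⟩ :
        ∃ u v : Set α, IsOpen u ∧ IsOpen v ∧ z j ∈ u ∧ z 0 ∈ v ∧ Disjoint u v :=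
      t2_separation hj
    letI : MetricSpace (ℕ → ℕ) := metricSpaceNatNat
    obtain ⟨εx, εxpos, hεx⟩ : ∃ εx : ℝ, εx > 0 ∧ Metric.ball (x j) εx ⊆ f j ⁻¹' u := by
      apply Metric.mem_nhds_iff.1
      exact (hf j).continuousAt.preimage_mem_nhds (u_open.mem_nhds hzu)
    obtain ⟨εy, εypos, hεy⟩ : ∃ εy : ℝ, εy > 0 ∧ Metric.ball (x 0) εy ⊆ f 0 ⁻¹' v := by
      apply Metric.mem_nhds_iff.1
      exact (hf 0).continuousAt.preimage_mem_nhds (v_open.mem_nhds hzv)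
    obtain ⟨n, hn⟩ : ∃ n : ℕ, (1 / 2 : ℝ) ^ n < min εx εy :=
      exists_pow_lt_of_lt_one (lt_min εxpos εypos) (by norm_num)
    have hcylu : f j '' cylinder (x j) n ⊆ u := by
      rw [image_subset_iff]
      refine Subset.trans ?_ hεx
      intro w hw
      rw [mem_cylinder_iff_dist_le] at hw
      exact lt_of_le_of_lt hw (hn.trans_le (min_le_left _ _))
    have hcylv : f 0 '' cylinder (x 0) n ⊆ v := by
      rw [image_subset_iff]
      refine Subset.trans ?_ hεy
      intro w hw
      rw [mem_cylinder_iff_dist_le] at hw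
      exact lt_of_le_of_lt hw (hn.trans_le (min_le_right _ _))
    -- pick a time where both slots `j` and `0` are refined at least `n` deep
    set t := max (tf j n) (tf 0 n) with htdef
    have hdj : n ≤ depth t j :=
      le_trans (le_trans (Nat.le_succ n) (htf j n)) (mono' j (tf j n) t (le_max_left _ _)).1
    have hd0 : n ≤ depth t 0 :=
      le_trans (le_trans (Nat.le_succ n) (htf 0 n)) (mono' 0 (tf 0 n) t (le_max_right _ _)).1
    -- and derive a contradiction with badness of the state at that time
    apply (p t).2
    refine ⟨fun m => if m = j then u else if m = 0 then v else univ, ?_, ?_, ?_⟩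
    · intro m
      dsimp only
      split_ifs
      exacts [u_open.measurableSet, v_open.measurableSet, MeasurableSet.univ]
    · intro m
      by_cases h1 : m = j
      · subst h1
        simp only [if_pos rfl]
        refine Subset.trans ?_ hcylu
        exact image_mono (key2 t m n hdj)
      · by_cases h2 : m = 0
        · subst h2
          simp only [if_neg h1, if_pos rfl]
          refine Subset.trans ?_ hcylv
          exact image_mono (key2 t 0 n hd0)
        · simp only [if_neg h1, if_neg h2]
          exact subset_univ _
    · rw [eq_empty_iff_forall_notMem]
      intro w hw
      have h1 := mem_iInter.1 hw j
      rw [if_pos rfl] at h1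
      have h2 := mem_iInter.1 hw 0
      rw [if_neg (fun hh => hj0 hh.symm), if_pos rfl] at h2
      exact (disjoint_left.1 huv) h1 h2

/-- **Novikov separation theorem**: countably many analytic sets with empty intersection can be
enclosed in measurable sets with empty intersection. -/
theorem novikov {α : Type*} [TopologicalSpace α] [T2Space α] [MeasurableSpace α]
    [OpensMeasurableSpace α] {A : ℕ → Set α} (hA : ∀ n, AnalyticSet (A n))
    (h : (⋂ n, A n) = ∅) :
    ∃ D : ℕ → Set α, (∀ n, MeasurableSet (D n)) ∧ (∀ n, A n ⊆ D n) ∧ (⋂ n, D n) = ∅ := by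
  classical
  by_cases hemp : ∃ n₀, A n₀ = ∅
  · obtain ⟨n₀, hn₀⟩ := hemp
    refine ⟨fun n => if n = n₀ then ∅ else univ, ?_, ?_, ?_⟩
    · intro n; dsimp only; split_ifs; exacts [MeasurableSet.empty, MeasurableSet.univ]
    · intro n; dsimp only; split_ifs with hn
      · subst hn; rw [hn₀]
      · exact subset_univ _
    · rw [eq_empty_iff_forall_notMem]
      intro x hx
      have := mem_iInter.1 hx n₀
      rw [if_pos rfl] at this
      exact this
  · push_neg at hemp
    have hfn : ∀ n, ∃ f : (ℕ → ℕ) → α, Continuous f ∧ range f = A n := by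
      intro n
      have h' := hA n
      rw [AnalyticSet] at h'
      rcases h' with h0 | ⟨f, hf, hfr⟩
      · exact absurd h0 (hemp n).ne_empty
      · exact ⟨f, hf, hfr⟩
    choose f hfc hfr using hfn
    have : (⋂ n, range (f n)) = ∅ := by
      rw [← h]; exact iInter_congr hfr
    obtain ⟨D, hDm, hDs, hDe⟩ := novikov_ranges hfc this
    exact ⟨D, hDm, fun n => (hfr n) ▸ hDs n, hDe⟩

lemma measurableSet_eq_bool {β : Type*} [MeasurableSpace β] {g g' : β → Bool}
    (hg : Measurable g) (hg' : Measurable g') : MeasurableSet {x | g x = g' x} := by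
  have : {x | g x = g' x} = ⋃ b, g ⁻¹' {b} ∩ g' ⁻¹' {b} := by
    ext x
    simp only [mem_setOf_eq, mem_iUnion, mem_inter_iff, mem_preimage, mem_singleton_iff]
    exact ⟨fun hh => ⟨g x, rfl, hh.symm⟩, fun ⟨b, h1, h2⟩ => h1.trans h2.symm⟩
  rw [this]
  exact MeasurableSet.iUnion fun b => (hg (measurableSet_singleton b)).inter
    (hg' (measurableSet_singleton b))

/-- A Luzin–Novikov type result: the saturation of a measurable set under a measurable
equivalence relation with finite classes on a standard Borel space is measurable. -/
theorem measurableSet_exists_rel {X : Type*} [MeasurableSpace X] [StandardBorelSpace X]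
    {F : X → X → Prop} (hEq : Equivalence F)
    (hmeas : MeasurableSet {p : X × X | F p.1 p.2}) (hfin : ∀ x, {y | F x y}.Finite)
    {Q : Set X} (hQ : MeasurableSet Q) :
    MeasurableSet {x | ∃ y, F x y ∧ y ∈ Q} := by
  classical
  obtain ⟨e, he, hinj⟩ :=
    MeasurableSpace.measurable_injection_nat_bool_of_countablySeparated X
  letI := upgradeStandardBorel (X × X)
  -- the sets of "pattern non-uniqueness"
  set B : ℕ → Set (X × X) :=
    fun n => {p | F p.1 p.2 ∧ ∃ z, F p.1 z ∧ z ≠ p.2 ∧ ∀ i < n, e z i = e p.2 i} with hB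
  have hW : ∀ n, MeasurableSet {q : (X × X) × X |
      F q.1.1 q.1.2 ∧ F q.1.1 q.2 ∧ q.2 ≠ q.1.2 ∧ ∀ i < n, e q.2 i = e q.1.2 i} := by
    intro n
    have h1 : MeasurableSet {q : (X × X) × X | F q.1.1 q.1.2} :=
      measurable_fst hmeas
    have h2 : MeasurableSet {q : (X × X) × X | F q.1.1 q.2} :=
      (Measurable.prodMk (measurable_fst.comp measurable_fst) measurable_snd) hmeas
    have h3 : MeasurableSet {q : (X × X) × X | q.2 = q.1.2} := by
      have heq : {q : (X × X) × X | q.2 = q.1.2} = ⋂ i, {q | e q.2 i = e q.1.2 i} := by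
        ext q
        simp only [mem_setOf_eq, mem_iInter]
        constructor
        · rintro hh i; rw [hh]
        · intro hh
          apply hinj
          funext i
          exact hh i
      rw [heq]
      refine MeasurableSet.iInter fun i => measurableSet_eq_bool ?_ ?_
      · exact (measurable_pi_apply i).comp (he.comp measurable_snd)
      · exact (measurable_pi_apply i).comp (he.comp (measurable_snd.comp measurable_fst))
    have h4 : MeasurableSet {q : (X × X) × X | ∀ i < n, e q.2 i = e q.1.2 i} := by
      have : {q : (X × X) × X | ∀ i < n, e q.2 i = e q.1.2 i}
          = ⋂ i, ⋂ (_ : i < n), {q : (X × X) × X | e q.2 i = e q.1.2 i} := by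
        ext q; simp [mem_iInter]
      rw [this]
      refine MeasurableSet.iInter fun i => MeasurableSet.iInter fun _ =>
        measurableSet_eq_bool ?_ ?_
      · exact (measurable_pi_apply i).comp (he.comp measurable_snd)
      · exact (measurable_pi_apply i).comp (he.comp (measurable_snd.comp measurable_fst))
    exact h1.inter (h2.inter (h3.compl.inter h4))
  have hBana : ∀ n, AnalyticSet (B n) := by
    intro n
    have himg := (hW n).analyticSet_image (f := Prod.fst) measurable_fst
    have : B n = Prod.fst '' {q : (X × X) × X |
        F q.1.1 q.1.2 ∧ F q.1.1 q.2 ∧ q.2 ≠ q.1.2 ∧ ∀ i < n, e q.2 i = e q.1.2 i} := by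
      ext p
      constructor
      · rintro ⟨h1, z, h2, h3, h4⟩
        exact ⟨(p, z), ⟨h1, h2, h3, h4⟩, rfl⟩
      · rintro ⟨q, ⟨h1, h2, h3, h4⟩, rfl⟩
        exact ⟨h1, q.2, h2, h3, h4⟩
    rw [this]
    exact himg
  have hBempty : (⋂ n, B n) = ∅ := by
    rw [eq_empty_iff_forall_notMem]
    rintro ⟨a, b⟩ hmem
    have hz : ∀ n, ∃ z, F a z ∧ z ≠ b ∧ ∀ i < n, e z i = e b i :=
      fun n => (mem_iInter.1 hmem n).2
    choose zf hz1 hz2 hz3 using hz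
    haveI : Finite {z // F a z} := (hfin a).to_subtype
    obtain ⟨y, hy⟩ := Finite.exists_infinite_fiber (fun n => (⟨zf n, hz1 n⟩ : {z // F a z}))
    replace hy := Set.infinite_coe_iff.mp hy
    have heb : e y.1 = e b := by
      funext i
      obtain ⟨n, hn1, hn2⟩ := hy.exists_gt i
      have : zf n = y.1 := congrArg Subtype.val hn1
      rw [← this]
      exact hz3 n i hn2
    obtain ⟨n, hn1, -⟩ := hy.exists_gt 0
    have : zf n = y.1 := congrArg Subtype.val hn1
    exact hz2 n (this.trans (hinj heb))
  obtain ⟨D, hDm, hDs, hDe⟩ := novikov hBana hBempty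
  -- the single-valued pieces
  set G : (Σ n : ℕ, Fin n → Bool) → Set (X × X) :=
    fun c => {p | F p.1 p.2 ∧ ∀ i : Fin c.1, e p.2 i.1 = c.2 i} \ D c.1 with hG
  have hGm : ∀ c, MeasurableSet (G c) := by
    rintro ⟨n, v⟩
    refine MeasurableSet.diff ?_ (hDm n)
    have : {p : X × X | F p.1 p.2 ∧ ∀ i : Fin n, e p.2 i.1 = v i}
        = {p : X × X | F p.1 p.2} ∩ ⋂ i : Fin n, {p : X × X | e p.2 i.1 = v i} := by
      ext p; simp [mem_iInter]
    rw [this]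
    refine hmeas.inter (MeasurableSet.iInter fun i => ?_)
    exact measurableSet_eq_bool
      ((measurable_pi_apply i.1).comp (he.comp measurable_snd)) measurable_const
  have hGinj : ∀ c, InjOn Prod.fst (G c) := by
    rintro ⟨n, v⟩ p hp p' hp' hfst
    have h2 : p.2 = p'.2 := by
      by_contra hne
      have hpB : p ∈ B n := by
        refine ⟨hp.1.1, p'.2, ?_, fun hh => hne hh.symm, fun i hi => ?_⟩
        · rw [hfst]; exact hp'.1.1
        · rw [(hp'.1.2 ⟨i, hi⟩), (hp.1.2 ⟨i, hi⟩)]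
      exact hp.2 (hDs n hpB)
    exact Prod.ext hfst h2
  have hGcover : ∀ p : X × X, F p.1 p.2 → ∃ c, p ∈ G c := by
    intro p hp
    have : ∃ n, p ∉ D n := by
      by_contra hall
      push_neg at hall
      have : p ∈ ⋂ n, D n := mem_iInter.2 hall
      rw [hDe] at this
      exact this
    obtain ⟨n, hn⟩ := this
    exact ⟨⟨n, fun i => e p.2 i.1⟩, ⟨hp, fun i => rfl⟩, hn⟩
  have hfinal : {x | ∃ y, F x y ∧ y ∈ Q}
      = ⋃ c, Prod.fst '' (G c ∩ {p : X × X | p.2 ∈ Q}) := by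
    ext x
    constructor
    · rintro ⟨y, hxy, hyQ⟩
      obtain ⟨c, hc⟩ := hGcover (x, y) hxy
      exact mem_iUnion.2 ⟨c, (x, y), ⟨hc, hyQ⟩, rfl⟩
    · intro hx
      obtain ⟨c, p, ⟨hpG, hpQ⟩, rfl⟩ := mem_iUnion.1 hx
      exact ⟨p.2, hpG.1.1, hpQ⟩
  rw [hfinal]
  refine MeasurableSet.iUnion fun c => ?_
  refine MeasurableSet.image_of_measurable_injOn ?_ measurable_fst
    ((hGinj c).mono inter_subset_left)
  exact (hGm c).inter (measurable_snd hQ)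


end NovikovSeparation

/-- Every hyperfinite Borel equivalence relation on a standard Borel space has
property `𝗉`. -/

theorem propertyP_of_hyperfinite
    {X : Type*} [MeasurableSpace X] [StandardBorelSpace X]
    (E : X → X → Prop)
    (F : ℕ → X → X → Prop) (hF : ∀ n, FiniteBorelER (F n))
    (hmono : ∀ n x y, F n x y → F (n + 1) x y)
    (hunion : ∀ x y, E x y ↔ ∃ n, F n x y) :
    PropertyP E := by
  classical
  intro φ hφ hinf hrange hcent
  have hφmk : ∀ m k, Measurable fun y => φ y m k :=
    fun m k => (measurable_pi_apply k).comp ((measurable_pi_apply m).comp hφ)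
  -- the sets of integers good for the whole class at stage `n`
  set Good : ℕ → ℕ → Set X :=
    fun n k => {x | ∀ y, F n x y → ∀ m, m ≤ n → φ y m k = true} with hGood
  have hGoodm : ∀ n k, MeasurableSet (Good n k) := by
    intro n k
    have hQ : MeasurableSet {y : X | ¬ ∀ m, m ≤ n → φ y m k = true} := by
      have : {y : X | ∀ m, m ≤ n → φ y m k = true}
          = ⋂ m, ⋂ (_ : m ≤ n), {y | φ y m k = true} := by
        ext y; simp
      have hpos : MeasurableSet {y : X | ∀ m, m ≤ n → φ y m k = true} := by
        rw [this]
        exact MeasurableSet.iInter fun m => MeasurableSet.iInter fun _ =>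
          (hφmk m k) (measurableSet_singleton true)
      exact hpos.compl
    have hsat := measurableSet_exists_rel (hF n).1 (hF n).2.1 (hF n).2.2 hQ
    have heq : Good n k
        = {x | ∃ y, F n x y ∧ y ∈ {y | ¬ ∀ m, m ≤ n → φ y m k = true}}ᶜ := by
      ext x
      constructor
      · intro hx hmem
        obtain ⟨y, hy, hP⟩ := hmem
        exact hP (hx y hy)
      · intro hx y hy m hm
        by_contra hc
        exact hx ⟨y, hy, fun hall => hc (hall m hm)⟩
    rw [heq]
    exact hsat.compl
  -- each `Good n k` collects, for `k` large, a member of each centered family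
  have hex : ∀ n x N, ∃ k, N ≤ k ∧ x ∈ Good n k := by
    intro n x N
    have hfin' : ({y | F n x y} ×ˢ (Set.Iic n) : Set (X × ℕ)).Finite :=
      ((hF n).2.2 x).prod (Set.finite_Iic n)
    set T : Finset (ℕ → Bool) := (hfin'.image fun p => φ p.1 p.2).toFinset with hT
    have hmemT : ∀ y m, F n x y → m ≤ n → φ y m ∈ T := by
      intro y m hy hm
      rw [hT, Set.Finite.mem_toFinset]
      exact ⟨(y, m), ⟨hy, hm⟩, rfl⟩
    have hTsub : ↑T ⊆ Set.range (φ x) := by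
      intro A hA
      rw [hT, Finset.mem_coe, Set.Finite.mem_toFinset] at hA
      obtain ⟨⟨y, m⟩, ⟨hy, _⟩, rfl⟩ := hA
      have hE : E x y := (hunion x y).2 ⟨n, hy⟩
      rw [hrange x y hE]
      exact Set.mem_range_self m
    obtain ⟨k, hk1, hk2⟩ := (hcent x T hTsub).exists_gt N
    refine ⟨k, le_of_lt hk2, ?_⟩
    intro y hy m hm
    exact hk1 (φ y m) (hmemT y m hy hm)
  -- the markers
  set a : ℕ → X → ℕ := fun n x => sInf {k | n ≤ k ∧ x ∈ Good n k} with ha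
  have haS : ∀ n x, a n x ∈ {k | n ≤ k ∧ x ∈ Good n k} := by
    intro n x
    apply Nat.sInf_mem
    obtain ⟨k, hk1, hk2⟩ := hex n x n
    exact ⟨k, hk1, hk2⟩
  have hage : ∀ n x, n ≤ a n x := fun n x => (haS n x).1
  have haGood : ∀ n x, x ∈ Good n (a n x) := fun n x => (haS n x).2
  have ham : ∀ n, Measurable (a n) := by
    intro n
    apply measurable_to_countable'
    intro k
    have hk : a n ⁻¹' {k}
        = {x | n ≤ k ∧ x ∈ Good n k} ∩ ⋂ j, ⋂ (_ : j < k), {x | n ≤ j ∧ x ∈ Good n j}ᶜ := by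
      ext x
      simp only [Set.mem_preimage, Set.mem_singleton_iff, Set.mem_inter_iff, Set.mem_setOf_eq,
        Set.mem_iInter, Set.mem_compl_iff]
      constructor
      · rintro rfl
        exact ⟨haS n x, fun j hj => Nat.notMem_of_lt_sInf hj⟩
      · rintro ⟨h1, h2⟩
        refine le_antisymm (Nat.sInf_le h1) ?_
        by_contra hlt
        push_neg at hlt
        exact h2 (a n x) hlt (haS n x)
    rw [hk]
    have hcond : ∀ j : ℕ, MeasurableSet {x | n ≤ j ∧ x ∈ Good n j} := by
      intro j
      by_cases hnj : n ≤ j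
      · have : {x | n ≤ j ∧ x ∈ Good n j} = Good n j := by
          ext x; simp [hnj]
        rw [this]; exact hGoodm n j
      · have : {x | n ≤ j ∧ x ∈ Good n j} = ∅ := by
          ext x; simp [hnj]
        rw [this]; exact MeasurableSet.empty
    exact (hcond k).inter (MeasurableSet.iInter fun j => MeasurableSet.iInter fun _ =>
      (hcond j).compl)
  -- invariance of the markers
  have hGoodinv : ∀ n x y, F n x y → ∀ k, (x ∈ Good n k ↔ y ∈ Good n k) := by
    intro n x y hxy k
    have hcls : ∀ z, F n x z ↔ F n y z := fun z =>
      ⟨fun h => (hF n).1.trans ((hF n).1.symm hxy) h, fun h => (hF n).1.trans hxy h⟩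
    constructor
    · intro h z hz; exact h z ((hcls z).2 hz)
    · intro h z hz; exact h z ((hcls z).1 hz)
  have hainv : ∀ n x y, F n x y → a n x = a n y := by
    intro n x y hxy
    have : {k | n ≤ k ∧ x ∈ Good n k} = {k | n ≤ k ∧ y ∈ Good n k} := by
      ext k
      simp only [Set.mem_setOf_eq]
      rw [hGoodinv n x y hxy k]
    rw [ha]
    simp only
    rw [this]
  have hFmono : ∀ N x y, F N x y → ∀ n, N ≤ n → F n x y := by
    intro N x y h n hn
    induction n, hn using Nat.le_induction with
    | base => exact h
    | succ n _ ih => exact hmono n x y ih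
  -- the pseudo-intersection
  refine ⟨fun x k => decide (∃ n, n ≤ k ∧ a n x = k), ?_, ?_, ?_, ?_⟩
  · -- measurability
    apply measurable_pi_lambda
    intro k
    have hset : MeasurableSet {x | ∃ n, n ≤ k ∧ a n x = k} := by
      have : {x | ∃ n, n ≤ k ∧ a n x = k} = ⋃ n, ⋃ (_ : n ≤ k), (a n) ⁻¹' {k} := by
        ext x; simp
      rw [this]
      exact MeasurableSet.iUnion fun n => MeasurableSet.iUnion fun _ =>
        (ham n) (measurableSet_singleton k)
    apply measurable_to_countable'
    intro b
    cases b
    · have : (fun x => decide (∃ n, n ≤ k ∧ a n x = k)) ⁻¹' {false}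
          = {x | ∃ n, n ≤ k ∧ a n x = k}ᶜ := by
        ext x; simp
      rw [this]
      exact hset.compl
    · have : (fun x => decide (∃ n, n ≤ k ∧ a n x = k)) ⁻¹' {true}
          = {x | ∃ n, n ≤ k ∧ a n x = k} := by
        ext x; simp
      rw [this]
      exact hset
  · -- infiniteness
    intro x
    apply Set.infinite_of_forall_exists_gt
    intro N
    refine ⟨a (N + 1) x, ?_, ?_⟩
    · simp only [Set.mem_setOf_eq, decide_eq_true_eq]
      exact ⟨N + 1, hage (N + 1) x, rfl⟩
    · exact lt_of_lt_of_le (Nat.lt_succ_self N) (hage (N + 1) x)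
  · -- almost invariance
    intro x y hxy
    obtain ⟨N, hN⟩ := (hunion x y).1 hxy
    have hagree : ∀ n, N ≤ n → a n x = a n y :=
      fun n hn => hainv n x y (hFmono N x y hN n hn)
    rw [EvEqB, Filter.eventually_atTop]
    refine ⟨Finset.sup (Finset.range N) (fun n => max (a n x) (a n y)) + 1, fun k hk => ?_⟩
    apply decide_eq_decide.2
    constructor
    · rintro ⟨n, hnk, hna⟩
      rcases lt_or_ge n N with h | h
      · exfalso
        have h1 : max (a n x) (a n y) ≤ Finset.sup (Finset.range N) (fun i => max (a i x) (a i y)) :=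
          Finset.le_sup (f := fun i => max (a i x) (a i y)) (Finset.mem_range.2 h)
        have h2 : a n x ≤ Finset.sup (Finset.range N) (fun i => max (a i x) (a i y)) :=
          le_trans (le_max_left _ _) h1
        omega
      · exact ⟨n, hnk, (hagree n h) ▸ hna⟩
    · rintro ⟨n, hnk, hna⟩
      rcases lt_or_ge n N with h | h
      · exfalso
        have h1 : max (a n x) (a n y) ≤ Finset.sup (Finset.range N) (fun i => max (a i x) (a i y)) :=
          Finset.le_sup (f := fun i => max (a i x) (a i y)) (Finset.mem_range.2 h)
        have h2 : a n y ≤ Finset.sup (Finset.range N) (fun i => max (a i x) (a i y)) :=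
          le_trans (le_max_right _ _) h1
        omega
      · exact ⟨n, hnk, (hagree n h).symm ▸ hna⟩
  · -- almost containment
    intro x m
    apply Set.Finite.subset ((Finset.range m).image fun n => a n x).finite_toSet
    rintro k ⟨hk1, hk2⟩
    rw [decide_eq_true_eq] at hk1
    obtain ⟨n, _, hna⟩ := hk1
    rcases lt_or_ge n m with h | h
    · rw [Finset.coe_image, Finset.coe_range]
      exact ⟨n, h, hna⟩
    · exfalso
      have := haGood n x x ((hF n).1.refl x) m h
      rw [hna] at this
      rw [this] at hk2
      exact Bool.noConfusion hk2
end
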